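/- For any real number r ≥ 0 and any elements a, b of a real inner product space E, one has ⟨‖a‖^r • a - ‖b‖^r • b, a - b⟩ ≥ 2^(-r) * ‖a - b‖^(r+2). -/
import Mathlib


open RealInnerProductSpace

/-- midpoint convexity of rpow -/
private lemma mid_rpow {x y p : ℝ} (hx : 0 ≤ x) (hy : 0 ≤ y) (hp : 1 ≤ p) :
    ((x + y) / 2) ^ p ≤ (x ^ p + y ^ p) / 2 := by
  have h := (convexOn_rpow hp).2 (Set.mem_Ici.2 hx) (Set.mem_Ici.2 hy)
    (by norm_num : (0:ℝ) ≤ 1/2) (by norm_num : (0:ℝ) ≤ 1/2) (by norm_num)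
  simp only [smul_eq_mul] at h
  calc ((x + y) / 2) ^ p = (1/2 * x + 1/2 * y) ^ p := by ring_nf
    _ ≤ 1/2 * x ^ p + 1/2 * y ^ p := h
    _ = (x ^ p + y ^ p) / 2 := by ring

/-- endpoint A, with wlog y ≤ x : ((x+y)/2)^r * (x-y)^2 ≤ (x^(r+1) - y^(r+1)) * (x - y) -/
private lemma endA {r x y : ℝ} (hr : 0 ≤ r) (hy : 0 ≤ y) (hxy : y ≤ x) :
    ((x + y) / 2) ^ r * (x - y) ^ 2 ≤ (x ^ (r+1) - y ^ (r+1)) * (x - y) := by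
  have hx : 0 ≤ x := hy.trans hxy
  have h1 : ((x + y) / 2) ^ r ≤ x ^ r :=
    Real.rpow_le_rpow (by positivity) (by linarith) hr
  have h2 : y ^ (r+1) ≤ x ^ r * y := by
    rw [Real.rpow_add' hy (by positivity), Real.rpow_one]
    exact mul_le_mul_of_nonneg_right (Real.rpow_le_rpow hy hxy hr) hy
  have h3 : x ^ (r+1) = x ^ r * x := by
    rw [Real.rpow_add' hx (by positivity), Real.rpow_one]
  have hxr : 0 ≤ x ^ r := Real.rpow_nonneg hx r
  nlinarith [sq_nonneg (x - y), mul_nonneg (sub_nonneg.2 h1) (sq_nonneg (x - y))]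

/-- endpoint B : ((x+y)/2)^r * (x+y)^2 ≤ (x^(r+1) + y^(r+1)) * (x + y) -/
private lemma endB {r x y : ℝ} (hr : 0 ≤ r) (hx : 0 ≤ x) (hy : 0 ≤ y) :
    ((x + y) / 2) ^ r * (x + y) ^ 2 ≤ (x ^ (r+1) + y ^ (r+1)) * (x + y) := by
  have hm : 0 ≤ (x + y) / 2 := by positivity
  have hmid := mid_rpow hx hy (by linarith : (1:ℝ) ≤ r + 1)
  have h3 : ((x + y) / 2) ^ (r+1) = ((x + y) / 2) ^ r * ((x + y) / 2) := by
    rw [Real.rpow_add' hm (by positivity), Real.rpow_one]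
  nlinarith [Real.rpow_nonneg hm r]

/-- main scalar inequality -/
private lemma scalar_key {r x y t : ℝ} (hr : 0 ≤ r) (hx : 0 ≤ x) (hy : 0 ≤ y)
    (ht1 : -(x*y) ≤ t) (ht2 : t ≤ x*y) :
    ((x + y) / 2) ^ r * (x^2 + y^2 - 2*t) ≤ x ^ (r+2) + y ^ (r+2) - (x^r + y^r) * t := by
  have hx2 : x ^ (r+2) = x ^ (r+1) * x := by
    rw [show r+2 = (r+1)+1 by ring, Real.rpow_add' hx (by positivity), Real.rpow_one]
  have hy2 : y ^ (r+2) = y ^ (r+1) * y := by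
    rw [show r+2 = (r+1)+1 by ring, Real.rpow_add' hy (by positivity), Real.rpow_one]
  have hx1 : x ^ (r+1) = x ^ r * x := by
    rw [Real.rpow_add' hx (by positivity), Real.rpow_one]
  have hy1 : y ^ (r+1) = y ^ r * y := by
    rw [Real.rpow_add' hy (by positivity), Real.rpow_one]
  have hA : ((x + y) / 2) ^ r * (x - y) ^ 2 ≤ (x ^ (r+1) - y ^ (r+1)) * (x - y) := by
    rcases le_total y x with h | h
    · exact endA hr hy h
    · have := endA hr hx h
      calc ((x + y) / 2) ^ r * (x - y) ^ 2
          = ((y + x) / 2) ^ r * (y - x) ^ 2 := by ring_nf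
        _ ≤ (y ^ (r+1) - x ^ (r+1)) * (y - x) := this
        _ = (x ^ (r+1) - y ^ (r+1)) * (x - y) := by ring
  have hB := endB (x := x) (y := y) hr hx hy
  set c := ((x + y) / 2) ^ r with hc
  have hc0 : 0 ≤ c := Real.rpow_nonneg (by positivity) r
  -- G(xy) ≥ 0 and G(-xy) ≥ 0
  have hGp : 0 ≤ x ^ (r+2) + y ^ (r+2) - (x^r + y^r) * (x*y) - c * (x^2 + y^2 - 2*(x*y)) := by
    nlinarith [hA]
  have hGn : 0 ≤ x ^ (r+2) + y ^ (r+2) - (x^r + y^r) * (-(x*y)) - c * (x^2 + y^2 - 2*(-(x*y))) := by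
    nlinarith [hB]
  rcases le_total (x^r + y^r) (2*c) with hs | hs
  · nlinarith [mul_nonneg (by linarith : (0:ℝ) ≤ t + x*y) (by linarith : (0:ℝ) ≤ 2*c - (x^r + y^r))]
  · nlinarith [mul_nonneg (by linarith : (0:ℝ) ≤ x*y - t) (by linarith : (0:ℝ) ≤ (x^r + y^r) - 2*c)]

theorem stmt_0 {E : Type*} [NormedAddCommGroup E] [InnerProductSpace ℝ E]
    (r : ℝ) (hr : 0 ≤ r) (a b : E) :
    ⟪(‖a‖ ^ r) • a - (‖b‖ ^ r) • b, a - b⟫ ≥ (2 : ℝ) ^ (-r) * ‖a - b‖ ^ (r + 2) := by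
  set x := ‖a‖ with hxd
  set y := ‖b‖ with hyd
  set t := ⟪a, b⟫ with htd
  have hx : 0 ≤ x := norm_nonneg a
  have hy : 0 ≤ y := norm_nonneg b
  have hn : 0 ≤ ‖a - b‖ := norm_nonneg _
  have ht2 : |t| ≤ x * y := abs_real_inner_le_norm a b
  have hinner : ⟪(x ^ r) • a - (y ^ r) • b, a - b⟫ =
      x ^ (r + 2) + y ^ (r + 2) - (x ^ r + y ^ r) * t := by
    rw [inner_sub_left, inner_sub_right, inner_sub_right, real_inner_smul_left,
      real_inner_smul_left, real_inner_smul_left, real_inner_smul_left,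
      real_inner_self_eq_norm_sq, real_inner_self_eq_norm_sq, real_inner_comm a b]
    have h1 : x ^ r * x ^ 2 = x ^ (r + 2) := by
      rw [Real.rpow_add' hx (by positivity), Real.rpow_two]
    have h2 : y ^ r * y ^ 2 = y ^ (r + 2) := by
      rw [Real.rpow_add' hy (by positivity), Real.rpow_two]
    rw [← hxd, ← hyd, ← htd, h1.symm, h2.symm]; ring
  have hnsq : ‖a - b‖ ^ 2 = x ^ 2 + y ^ 2 - 2 * t := by
    rw [@norm_sub_sq_real]; ring
  have hnr : ‖a - b‖ ^ (r + 2) = ‖a - b‖ ^ r * (x ^ 2 + y ^ 2 - 2 * t) := by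
    rw [Real.rpow_add' hn (by positivity), Real.rpow_two, hnsq]
  have hnle : ‖a - b‖ ≤ x + y := norm_sub_le a b
  have hstep1 : (2:ℝ) ^ (-r) * ‖a - b‖ ^ (r + 2) ≤ ((x + y)/2) ^ r * (x^2 + y^2 - 2*t) := by
    have hq : 0 ≤ x ^ 2 + y ^ 2 - 2 * t := by rw [← hnsq]; positivity
    have h2r : (2:ℝ) ^ (-r) * ‖a - b‖ ^ r ≤ ((x + y)/2) ^ r := by
      have h1 : ‖a - b‖ ^ r ≤ (x + y) ^ r := Real.rpow_le_rpow hn hnle hr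
      have h2 : (2:ℝ) ^ (-r) * (x + y) ^ r = ((x + y)/2) ^ r := by
        rw [Real.rpow_neg (by norm_num), Real.div_rpow (by linarith) (by norm_num)]
        ring
      calc (2:ℝ) ^ (-r) * ‖a - b‖ ^ r ≤ (2:ℝ) ^ (-r) * (x + y) ^ r :=
            mul_le_mul_of_nonneg_left h1 (Real.rpow_nonneg (by norm_num) _)
        _ = ((x + y)/2) ^ r := h2
    calc (2:ℝ) ^ (-r) * ‖a - b‖ ^ (r + 2)
        = ((2:ℝ) ^ (-r) * ‖a - b‖ ^ r) * (x^2 + y^2 - 2*t) := by rw [hnr]; ring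
      _ ≤ ((x + y)/2) ^ r * (x^2 + y^2 - 2*t) :=
          mul_le_mul_of_nonneg_right h2r hq
  have hstep2 := scalar_key hr hx hy (neg_le_of_abs_le ht2) (le_of_abs_le ht2)
  rw [hinner]
  calc (2:ℝ) ^ (-r) * ‖a - b‖ ^ (r + 2) ≤ ((x + y)/2) ^ r * (x^2 + y^2 - 2*t) := hstep1
    _ ≤ x ^ (r + 2) + y ^ (r + 2) - (x ^ r + y ^ r) * t := hstep2
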